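/- Consider the action of the 24-element quaternion group image O_D^× ⊂ GL_2(F_5) on the Serre weights σ_{m,n} = Sym^m(F_5^2) ⊗ det^n for 0 ≤ m ≤ 4, 0 ≤ n ≤ 3. The space of O_D^×-invariants (σ_{m,n})^{O_D^×} is nonzero if and only if m = 0. -/
import Mathlib


open Matrix MvPolynomial

/-- The image in `GL₂(F₅)` of the 24-element Hurwitz quaternion unit group `O_D^×`
(listed explicitly as matrices over `F₅`). -/
def ODunits : Set (Matrix (Fin 2) (Fin 2) (ZMod 5)) :=
  {1, -1, !![0,1;4,0], -!![0,1;4,0], !![2,0;0,3], -!![2,0;0,3], !![0,3;3,0], -!![0,3;3,0],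
   !![4,2;1,2], -!![4,2;1,2], !![3,2;1,1], -!![3,2;1,1], !![4,1;2,2], -!![4,1;2,2],
   !![2,2;1,4], -!![2,2;1,4], !![4,4;3,2], -!![4,4;3,2], !![3,1;2,1], -!![3,1;2,1],
   !![1,2;1,3], -!![1,2;1,3], !![3,4;3,1], -!![3,4;3,1]}

/-- The action of `g ∈ GL₂(F₅)` on polynomials in two variables defining the Serre weight
`σ_{m,n} = Sym^m(F₅²) ⊗ det^n`: substitution by `g` twisted by `det(g)^n`. -/
noncomputable def serreAct (n : ℕ) (g : Matrix (Fin 2) (Fin 2) (ZMod 5))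
    (f : MvPolynomial (Fin 2) (ZMod 5)) : MvPolynomial (Fin 2) (ZMod 5) :=
  (g.det) ^ n • MvPolynomial.bind₁
    (fun i => ∑ j : Fin 2, MvPolynomial.C (g i j) * MvPolynomial.X j) f

def ODlist : List (Matrix (Fin 2) (Fin 2) (ZMod 5)) :=
  [1, -1, !![0,1;4,0], -!![0,1;4,0], !![2,0;0,3], -!![2,0;0,3], !![0,3;3,0], -!![0,3;3,0],
   !![4,2;1,2], -!![4,2;1,2], !![3,2;1,1], -!![3,2;1,1], !![4,1;2,2], -!![4,1;2,2],
   !![2,2;1,4], -!![2,2;1,4], !![4,4;3,2], -!![4,4;3,2], !![3,1;2,1], -!![3,1;2,1],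
   !![1,2;1,3], -!![1,2;1,3], !![3,4;3,1], -!![3,4;3,1]]

lemma ODlist_sub : ∀ u ∈ ODlist, u ∈ ODunits := by
  intro u hu
  simp only [ODlist, List.mem_cons, List.mem_singleton, List.not_mem_nil, or_false] at hu
  simp only [ODunits, Set.mem_insert_iff, Set.mem_singleton_iff]
  exact hu

lemma ODunits_det_one : ∀ u ∈ ODunits, u.det = 1 := by
  intro u hu
  simp only [ODunits, Set.mem_insert_iff, Set.mem_singleton_iff] at hu
  rcases hu with rfl|rfl|rfl|rfl|rfl|rfl|rfl|rfl|rfl|rfl|rfl|rfl|rfl|rfl|rfl|rfl|rfl|rfl|rfl|rfl|rfl|rfl|rfl|rfl <;> decide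

lemma ODlist_cover : ∀ w : Fin 2 → ZMod 5, w ≠ 0 → ∃ u ∈ ODlist, ∀ i, u i 0 = w i := by
  decide

lemma eval_serreAct (n : ℕ) (u : Matrix (Fin 2) (Fin 2) (ZMod 5)) (hu : u.det = 1)
    (f : MvPolynomial (Fin 2) (ZMod 5)) (v : Fin 2 → ZMod 5) :
    eval v (serreAct n u f) = eval (fun i => ∑ j : Fin 2, u i j * v j) f := by
  rw [serreAct, smul_eval, hu, one_pow, one_mul]
  have h : eval v (bind₁ (fun i => ∑ j : Fin 2, C (u i j) * X j) f)
      = aeval v (bind₁ (fun i => ∑ j : Fin 2, C (u i j) * X j) f) := rfl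
  rw [h, aeval_bind₁ (S := ZMod 5) v _ f]
  have h2 : (fun i => aeval v (∑ j : Fin 2, C (u i j) * X j))
      = fun i => ∑ j : Fin 2, u i j * v j := by
    funext i; simp
  rw [h2]; rfl

lemma sum_pow_zmod5 (k : ℕ) (hk : k ≤ 3) : ∑ x : ZMod 5, x ^ k = 0 := by
  interval_cases k <;> decide

lemma sum_eval_zero {m : ℕ} (f : MvPolynomial (Fin 2) (ZMod 5)) (hf : f.IsHomogeneous m)
    (h1 : 1 ≤ m) (h4 : m ≤ 4) : ∑ v : Fin 2 → ZMod 5, eval v f = 0 := by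
  have hsupp : ∀ d ∈ f.support, d 0 + d 1 = m := by
    intro d hd
    have hw := hf (MvPolynomial.mem_support_iff.mp hd)
    simpa [Finsupp.weight_apply, Finsupp.sum_fintype, Fin.sum_univ_two] using hw
  calc ∑ v : Fin 2 → ZMod 5, eval v f
      = ∑ v : Fin 2 → ZMod 5, ∑ d ∈ f.support, f.coeff d * ∏ i, v i ^ d i := by
        simp_rw [eval_eq']
    _ = ∑ d ∈ f.support, ∑ v : Fin 2 → ZMod 5, f.coeff d * ∏ i, v i ^ d i :=
        Finset.sum_comm
    _ = 0 := by
        refine Finset.sum_eq_zero fun d hd => ?_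
        rw [← Finset.mul_sum]
        have key : ∑ v : Fin 2 → ZMod 5, ∏ i, v i ^ d i
            = (∑ x : ZMod 5, x ^ d 0) * (∑ x : ZMod 5, x ^ d 1) := by
          have e1 : ∑ v : Fin 2 → ZMod 5, ∏ i, v i ^ d i
              = ∑ p : ZMod 5 × ZMod 5, p.1 ^ d 0 * p.2 ^ d 1 := by
            refine Fintype.sum_equiv (piFinTwoEquiv fun _ => ZMod 5) _ _ ?_
            intro v; simp [Fin.prod_univ_two]
          rw [e1, Finset.sum_mul_sum]
          exact Fintype.sum_prod_type _
        rw [key]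
        have hdm := hsupp d hd
        rcases le_or_gt (d 0) 3 with h|h
        · rw [sum_pow_zmod5 (d 0) h, zero_mul, mul_zero]
        · rw [sum_pow_zmod5 (d 1) (by omega), mul_zero, mul_zero]

/-- For the Serre weights `σ_{m,n} = Sym^m(F₅²) ⊗ det^n` with `0 ≤ m ≤ 4`, `0 ≤ n ≤ 3`, the
space of invariants `(σ_{m,n})^{O_D^×}` under the 24-element quaternion group
`O_D^× ⊂ GL₂(F₅)` is nonzero if and only if `m = 0`. -/
theorem serre_weight_invariants_nonzero_iff (m n : ℕ) (hm : m ≤ 4) (hn : n ≤ 3) :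
    (∃ f : MvPolynomial (Fin 2) (ZMod 5), f ≠ 0 ∧ f.IsHomogeneous m ∧
      ∀ u ∈ ODunits, serreAct n u f = f) ↔ m = 0 := by
  constructor
  · rintro ⟨f, hf0, hfh, hinv⟩
    by_contra hm0
    have heval : ∀ u ∈ ODunits, ∀ v : Fin 2 → ZMod 5,
        eval (fun i => ∑ j : Fin 2, u i j * v j) f = eval v f := by
      intro u hu v
      rw [← eval_serreAct n u (ODunits_det_one u hu) f v, hinv u hu]
    have hconst : ∀ w : Fin 2 → ZMod 5, w ≠ 0 →
        eval w f = eval (![1, 0] : Fin 2 → ZMod 5) f := by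
      intro w hw
      obtain ⟨u, hu, hcol⟩ := ODlist_cover w hw
      have h := heval u (ODlist_sub u hu) ![1, 0]
      have hwcol : (fun i => ∑ j : Fin 2, u i j * (![1, 0] : Fin 2 → ZMod 5) j) = w := by
        funext i
        rw [Fin.sum_univ_two]
        simp only [Matrix.cons_val_zero, Matrix.cons_val_one, Matrix.head_cons,
          mul_one, mul_zero, add_zero]
        exact hcol i
      rw [← h, hwcol]
    have hzero : eval (0 : Fin 2 → ZMod 5) f = 0 := by
      rw [eval_zero, constantCoeff_eq]
      refine hfh.coeff_eq_zero (d := 0) ?_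
      rw [map_zero]
      omega
    set c := eval (![1, 0] : Fin 2 → ZMod 5) f with hc_def
    have hsum24 : ∑ v : Fin 2 → ZMod 5, eval v f = 4 * c := by
      have hv : ∀ v : Fin 2 → ZMod 5, eval v f = (if v = 0 then 0 else 1) * c := by
        intro v
        by_cases h : v = 0
        · rw [h, hzero, if_pos rfl, zero_mul]
        · rw [hconst v h, if_neg h, one_mul]
      have h4 : (∑ v : Fin 2 → ZMod 5, if v = 0 then (0 : ZMod 5) else 1) = 4 := by decide
      calc ∑ v : Fin 2 → ZMod 5, eval v f
          = ∑ v : Fin 2 → ZMod 5, (if v = 0 then 0 else 1) * c :=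
            Finset.sum_congr rfl fun v _ => hv v
        _ = (∑ v : Fin 2 → ZMod 5, if v = 0 then (0 : ZMod 5) else 1) * c := by
            rw [Finset.sum_mul]
        _ = 4 * c := by rw [h4]
    have h40 : (4 : ZMod 5) ≠ 0 := by decide
    haveI : Fact (Nat.Prime 5) := ⟨by norm_num⟩
    have hc : c = 0 := by
      have h4 : (4 : ZMod 5) * c = 0 := by
        rw [← hsum24, sum_eval_zero f hfh (by omega) hm]
      exact mul_left_cancel₀ h40 (by rw [h4, mul_zero])
    refine absurd ?_ hf0
    refine MvPolynomial.eq_zero_of_eval_eq_zero (Fin 2) (K := ZMod 5) f ?_ ?_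
    · intro v
      by_cases h : v = 0
      · rw [h]; exact hzero
      · rw [hconst v h, hc]
    · rw [MvPolynomial.mem_restrictDegree]
      intro s hs i
      have h1 : s i ≤ Finsupp.degree s := Finsupp.le_degree i s
      have h2 : Finsupp.degree s = m := by
        rw [Finsupp.degree_eq_weight_one]
        exact hfh (MvPolynomial.mem_support_iff.mp hs)
      have : Fintype.card (ZMod 5) = 5 := ZMod.card 5
      omega
  · rintro rfl
    have h10 : (1 : MvPolynomial (Fin 2) (ZMod 5)) ≠ 0 := fun h => by
      have h' := congrArg constantCoeff h
      rw [_root_.map_one, _root_.map_zero] at h'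
      exact absurd h' (by decide)
    refine ⟨1, h10, MvPolynomial.isHomogeneous_one _ _, ?_⟩
    intro u hu
    rw [serreAct, _root_.map_one, ODunits_det_one u hu, one_pow, one_smul]
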